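/- Let c(n,m) denote the number of increasing 1,2-trees on the vertex set {1,…,n} having exactly m edges. Then c(1,0) = 1, c(1,m) = 0 for every m ≥ 1, c(2,1) = 1, and for all integers n ≥ 2 and m ≥ 2 one has c(n,m) = (n−1)·c(n−1,m−1) + (m−2)·c(n−1,m−2). -/

import Mathlib

open SimpleGraph

/-- The set of neighbors of `v` having a smaller label. -/
def lowerNbrs {n : ℕ} (G : SimpleGraph (Fin n)) (v : Fin n) : Set (Fin n) :=
  {x | G.Adj v x ∧ x < v}

/-- `G` is an increasing 1,2-tree: every vertex other than the first one has a nonempty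
set of smaller neighbors, of cardinality at most 2, forming a clique. -/
def IsIncreasing12Tree {n : ℕ} (G : SimpleGraph (Fin n)) : Prop :=
  ∀ v : Fin n, 1 ≤ v.val →
    (lowerNbrs G v).Nonempty ∧ (lowerNbrs G v).ncard ≤ 2 ∧
      ∀ x ∈ lowerNbrs G v, ∀ y ∈ lowerNbrs G v, x ≠ y → G.Adj x y

/-- The set of vertices reachable from `v` after deleting the edge `{u,v}`
(in a tree, the vertex set of the subtree rooted at `v` when `v` is the child endpoint). -/
def subtreeSet {n : ℕ} (G : SimpleGraph (Fin n)) (u v : Fin n) : Set (Fin n) :=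
  {w | (G.deleteEdges {s(u, v)}).Reachable v w}

/-- `v` is the child endpoint of the edge `{u,v}`: after deleting this edge,
`v` is no longer reachable from the root. -/
def IsChild {n : ℕ} (G : SimpleGraph (Fin n)) (root u v : Fin n) : Prop :=
  G.Adj u v ∧ ¬ (G.deleteEdges {s(u, v)}).Reachable root v

/-- The minimal label occurring in a set of vertices (labels being `Fin.val`). -/
noncomputable def minLabel {n : ℕ} (S : Set (Fin n)) : ℕ := sInf (Fin.val '' S)

/-- An edge `{u,v}` with child endpoint `v` is a twist if the minimal label in the
subtree rooted at `v` is smaller than the label of `u`. -/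
def IsTwist {n : ℕ} (G : SimpleGraph (Fin n)) (root : Fin n) (e : Sym2 (Fin n)) : Prop :=
  ∃ u v : Fin n, e = s(u, v) ∧ IsChild G root u v ∧ minLabel (subtreeSet G u v) < u.val

/-- An edge `{u,v}` with child endpoint `v` is increasing if the label of `u` is smaller
than every label in the subtree rooted at `v`. -/
def IsIncreasingEdge {n : ℕ} (G : SimpleGraph (Fin n)) (root : Fin n) (e : Sym2 (Fin n)) : Prop :=
  ∃ u v : Fin n, e = s(u, v) ∧ IsChild G root u v ∧ u.val < minLabel (subtreeSet G u v)

/-- The number of twists of `G` (with respect to the given root). -/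
noncomputable def numTwists {n : ℕ} (G : SimpleGraph (Fin n)) (root : Fin n) : ℕ :=
  Nat.card {e : Sym2 (Fin n) // e ∈ G.edgeSet ∧ IsTwist G root e}

/-- The number of increasing 1,2-trees on `n` vertices with `m` edges. -/
noncomputable def numInc12Trees (n m : ℕ) : ℕ :=
  Nat.card {G : SimpleGraph (Fin n) // IsIncreasing12Tree G ∧ G.edgeSet.ncard = m}

/-- The number of Cayley trees on `n ≥ 1` vertices (rooted at the vertex with label 1)
with exactly `j` twists. -/
noncomputable def numCayleyTwist (n j : ℕ) (h : 0 < n) : ℕ :=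
  Nat.card {G : SimpleGraph (Fin n) // G.IsTree ∧ numTwists G ⟨0, h⟩ = j}

namespace Inc12Aux

variable {k : ℕ}

/-- Restriction of a graph on `Fin (k+1)` to the first `k` vertices. -/
def res (G : SimpleGraph (Fin (k + 1))) : SimpleGraph (Fin k) := G.comap Fin.castSucc

/-- Extension of a graph on `Fin k` by a new top vertex attached to the set `D`. -/
def glue (G : SimpleGraph (Fin k)) (D : Set (Fin k)) : SimpleGraph (Fin (k + 1)) where
  Adj u v := (∃ a b, G.Adj a b ∧ u = a.castSucc ∧ v = b.castSucc) ∨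
    (u = Fin.last k ∧ ∃ a ∈ D, v = a.castSucc) ∨
    (v = Fin.last k ∧ ∃ a ∈ D, u = a.castSucc)
  symm := by
    constructor
    rintro u v (⟨a, b, h, rfl, rfl⟩ | ⟨rfl, a, ha, rfl⟩ | ⟨rfl, a, ha, rfl⟩)
    · exact Or.inl ⟨b, a, h.symm, rfl, rfl⟩
    · exact Or.inr (Or.inr ⟨rfl, a, ha, rfl⟩)
    · exact Or.inr (Or.inl ⟨rfl, a, ha, rfl⟩)
  loopless := by
    constructor
    rintro u (⟨a, b, h, rfl, h2⟩ | ⟨rfl, a, ha, h2⟩ | ⟨rfl, a, ha, h2⟩)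
    · exact h.ne (Fin.castSucc_injective k h2)
    · exact (Fin.castSucc_lt_last a).ne' h2
    · exact (Fin.castSucc_lt_last a).ne' h2

lemma glue_adj (G : SimpleGraph (Fin k)) (D : Set (Fin k)) (u v : Fin (k + 1)) :
    (glue G D).Adj u v ↔ (∃ a b, G.Adj a b ∧ u = a.castSucc ∧ v = b.castSucc) ∨
    (u = Fin.last k ∧ ∃ a ∈ D, v = a.castSucc) ∨
    (v = Fin.last k ∧ ∃ a ∈ D, u = a.castSucc) := Iff.rfl

lemma glue_adj_castSucc (G : SimpleGraph (Fin k)) (D : Set (Fin k)) (a b : Fin k) :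
    (glue G D).Adj a.castSucc b.castSucc ↔ G.Adj a b := by
  rw [glue_adj]
  constructor
  · rintro (⟨a', b', h, h1, h2⟩ | ⟨h1, -⟩ | ⟨h1, -⟩)
    · obtain rfl := Fin.castSucc_injective k h1
      obtain rfl := Fin.castSucc_injective k h2
      exact h
    · exact absurd h1 (Fin.castSucc_lt_last a).ne
    · exact absurd h1 (Fin.castSucc_lt_last b).ne
  · intro h; exact Or.inl ⟨a, b, h, rfl, rfl⟩

lemma glue_adj_last (G : SimpleGraph (Fin k)) (D : Set (Fin k)) (v : Fin (k + 1)) :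
    (glue G D).Adj (Fin.last k) v ↔ ∃ a ∈ D, v = a.castSucc := by
  rw [glue_adj]
  constructor
  · rintro (⟨a, b, h, h1, rfl⟩ | ⟨-, h⟩ | ⟨rfl, a, ha, h2⟩)
    · exact absurd h1.symm (Fin.castSucc_lt_last a).ne
    · exact h
    · exact absurd h2.symm (Fin.castSucc_lt_last a).ne
  · rintro ⟨a, ha, rfl⟩; exact Or.inr (Or.inl ⟨rfl, a, ha, rfl⟩)

lemma res_glue (G : SimpleGraph (Fin k)) (D : Set (Fin k)) : res (glue G D) = G := by
  ext a b; exact glue_adj_castSucc G D a b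

/-- The attachment set of the top vertex. -/
def att (G : SimpleGraph (Fin (k + 1))) : Set (Fin k) := {a | G.Adj (Fin.last k) a.castSucc}

lemma att_glue (G : SimpleGraph (Fin k)) (D : Set (Fin k)) : att (glue G D) = D := by
  ext a
  simp only [att, Set.mem_setOf_eq, glue_adj_last]
  constructor
  · rintro ⟨b, hb, h⟩; rwa [Fin.castSucc_injective k h]
  · intro ha; exact ⟨a, ha, rfl⟩

lemma glue_eq_self (G : SimpleGraph (Fin (k + 1))) : glue (res G) (att G) = G := by
  ext u v
  rcases eq_or_ne u (Fin.last k) with rfl | hu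
  · rw [glue_adj_last]
    constructor
    · rintro ⟨a, ha, rfl⟩; exact ha
    · intro h
      obtain ⟨a, rfl⟩ := Fin.exists_castSucc_eq.mpr h.ne'
      exact ⟨a, h, rfl⟩
  · obtain ⟨a, rfl⟩ := Fin.exists_castSucc_eq.mpr hu
    rcases eq_or_ne v (Fin.last k) with rfl | hv
    · rw [adj_comm, glue_adj_last, adj_comm]
      constructor
      · rintro ⟨b, hb, h⟩; obtain rfl := Fin.castSucc_injective k h; exact hb
      · intro h; exact ⟨a, h, rfl⟩
    · obtain ⟨b, rfl⟩ := Fin.exists_castSucc_eq.mpr hv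
      rw [glue_adj_castSucc]
      exact Iff.rfl

lemma lowerNbrs_glue_last (G : SimpleGraph (Fin k)) (D : Set (Fin k)) :
    lowerNbrs (glue G D) (Fin.last k) = Fin.castSucc '' D := by
  ext x
  simp only [lowerNbrs, Set.mem_setOf_eq, glue_adj_last, Set.mem_image]
  constructor
  · rintro ⟨⟨a, ha, rfl⟩, -⟩; exact ⟨a, ha, rfl⟩
  · rintro ⟨a, ha, rfl⟩; exact ⟨⟨a, ha, rfl⟩, Fin.castSucc_lt_last a⟩

lemma lowerNbrs_glue_castSucc (G : SimpleGraph (Fin k)) (D : Set (Fin k)) (w : Fin k) :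
    lowerNbrs (glue G D) w.castSucc = Fin.castSucc '' lowerNbrs G w := by
  ext x
  simp only [lowerNbrs, Set.mem_setOf_eq, Set.mem_image]
  constructor
  · rintro ⟨hadj, hlt⟩
    obtain ⟨b, rfl⟩ := Fin.exists_castSucc_eq.mpr (hlt.trans (Fin.castSucc_lt_last w)).ne
    exact ⟨b, ⟨(glue_adj_castSucc G D w b).mp hadj, Fin.castSucc_lt_castSucc_iff.mp hlt⟩, rfl⟩
  · rintro ⟨b, ⟨hadj, hlt⟩, rfl⟩
    exact ⟨(glue_adj_castSucc G D w b).mpr hadj, Fin.castSucc_lt_castSucc_iff.mpr hlt⟩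

end Inc12Aux

namespace Inc12Aux
variable {k : ℕ}

lemma isInc_glue_iff (G : SimpleGraph (Fin k)) (D : Set (Fin k)) (hk : 1 ≤ k) :
    IsIncreasing12Tree (glue G D) ↔
      IsIncreasing12Tree G ∧ D.Nonempty ∧ D.ncard ≤ 2 ∧
        ∀ x ∈ D, ∀ y ∈ D, x ≠ y → G.Adj x y := by
  have hinj := Fin.castSucc_injective k
  constructor
  · intro h
    refine ⟨?_, ?_, ?_, ?_⟩
    · intro w hw
      obtain ⟨hne, hcard, hcl⟩ := h w.castSucc (by simpa using hw)
      rw [lowerNbrs_glue_castSucc] at hne hcard hcl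
      refine ⟨(Set.image_nonempty (f := Fin.castSucc)).mp hne, ?_, ?_⟩
      · rwa [Set.ncard_image_of_injective _ hinj] at hcard
      · intro x hx y hy hxy
        have := hcl _ ⟨x, hx, rfl⟩ _ ⟨y, hy, rfl⟩ (fun hc => hxy (hinj hc))
        rwa [glue_adj_castSucc] at this
    all_goals {
      obtain ⟨hne, hcard, hcl⟩ := h (Fin.last k) (by simpa using hk)
      rw [lowerNbrs_glue_last] at hne hcard hcl
      first
      | exact (Set.image_nonempty (f := Fin.castSucc)).mp hne
      | (rwa [Set.ncard_image_of_injective _ hinj] at hcard)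
      | { intro x hx y hy hxy
          have := hcl _ ⟨x, hx, rfl⟩ _ ⟨y, hy, rfl⟩ (fun hc => hxy (hinj hc))
          rwa [glue_adj_castSucc] at this } }
  · rintro ⟨hG, hne, hcard, hcl⟩ v hv
    rcases eq_or_ne v (Fin.last k) with rfl | hv'
    · rw [lowerNbrs_glue_last]
      refine ⟨hne.image _, ?_, ?_⟩
      · rwa [Set.ncard_image_of_injective _ hinj]
      · rintro x ⟨a, ha, rfl⟩ y ⟨b, hb, rfl⟩ hxy
        exact (glue_adj_castSucc G D a b).mpr (hcl a ha b hb (fun hc => hxy (hc ▸ rfl)))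
    · obtain ⟨w, rfl⟩ := Fin.exists_castSucc_eq.mpr hv'
      obtain ⟨hne', hcard', hcl'⟩ := hG w (by simpa using hv)
      rw [lowerNbrs_glue_castSucc]
      refine ⟨hne'.image _, ?_, ?_⟩
      · rwa [Set.ncard_image_of_injective _ hinj]
      · rintro x ⟨a, ha, rfl⟩ y ⟨b, hb, rfl⟩ hxy
        exact (glue_adj_castSucc G D a b).mpr (hcl' a ha b hb (fun hc => hxy (hc ▸ rfl)))

lemma edgeSet_glue (G : SimpleGraph (Fin k)) (D : Set (Fin k)) :
    (glue G D).edgeSet = Sym2.map Fin.castSucc '' G.edgeSet ∪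
      (fun a : Fin k => s(Fin.last k, a.castSucc)) '' D := by
  ext e
  induction e using Sym2.ind with
  | _ u v =>
    simp only [SimpleGraph.mem_edgeSet, Set.mem_union, Set.mem_image, glue_adj]
    constructor
    · rintro (⟨a, b, h, rfl, rfl⟩ | ⟨rfl, a, ha, rfl⟩ | ⟨rfl, a, ha, rfl⟩)
      · exact Or.inl ⟨s(a, b), h, Sym2.map_pair_eq _ _ _⟩
      · exact Or.inr ⟨a, ha, rfl⟩
      · exact Or.inr ⟨a, ha, Sym2.eq_swap⟩
    · rintro (⟨e', he', heq⟩ | ⟨a, ha, heq⟩)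
      · induction e' using Sym2.ind with
        | _ a b =>
          rw [Sym2.map_pair_eq, Sym2.eq_iff] at heq
          rcases heq with ⟨rfl, rfl⟩ | ⟨rfl, rfl⟩
          · exact Or.inl ⟨a, b, he', rfl, rfl⟩
          · exact Or.inl ⟨b, a, (SimpleGraph.mem_edgeSet G).mp he' |>.symm, rfl, rfl⟩
      · rw [Sym2.eq_iff] at heq
        rcases heq with ⟨rfl, rfl⟩ | ⟨rfl, rfl⟩
        · exact Or.inr (Or.inl ⟨rfl, a, ha, rfl⟩)
        · exact Or.inr (Or.inr ⟨rfl, a, ha, rfl⟩)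

lemma ncard_edgeSet_glue (G : SimpleGraph (Fin k)) (D : Set (Fin k)) :
    (glue G D).edgeSet.ncard = G.edgeSet.ncard + D.ncard := by
  have hinj := Fin.castSucc_injective k
  have hinj2 : Function.Injective (fun a : Fin k => s(Fin.last k, a.castSucc)) := by
    intro a b h
    rw [Sym2.eq_iff] at h
    rcases h with ⟨-, h⟩ | ⟨h, -⟩
    · exact hinj h
    · exact absurd h.symm (Fin.castSucc_lt_last b).ne
  have hdisj : Disjoint (Sym2.map Fin.castSucc '' G.edgeSet)
      ((fun a : Fin k => s(Fin.last k, a.castSucc)) '' D) := by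
    rw [Set.disjoint_left]
    rintro e ⟨e', he', rfl⟩ ⟨a, ha, heq⟩
    induction e' using Sym2.ind with
    | _ x y =>
      rw [Sym2.map_pair_eq, Sym2.eq_iff] at heq
      rcases heq with ⟨h, -⟩ | ⟨h, -⟩
      · exact absurd h (Fin.castSucc_lt_last x).ne'
      · exact absurd h (Fin.castSucc_lt_last y).ne'
  rw [edgeSet_glue, Set.ncard_union_eq hdisj (Set.toFinite _) (Set.toFinite _),
    Set.ncard_image_of_injective _ (Sym2.map.injective hinj),
    Set.ncard_image_of_injective _ hinj2]

end Inc12Aux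

namespace Inc12Aux
variable {k m : ℕ}

instance : Finite (SimpleGraph (Fin k)) :=
  Finite.of_injective (fun G => G.Adj) (fun a b h => SimpleGraph.ext h)

abbrev Sub (k j : ℕ) := {G : SimpleGraph (Fin k) // IsIncreasing12Tree G ∧ G.edgeSet.ncard = j}

def T (k m : ℕ) :=
  (Sub k (m - 1) × Fin k) ⊕ (Σ G : Sub k (m - 2), {e : Sym2 (Fin k) // e ∈ G.1.edgeSet})

instance : Finite (T k m) := by unfold T; infer_instance

lemma memSet_pair (p q : Fin k) : {a | a ∈ s(p, q)} = ({p, q} : Set (Fin k)) := by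
  ext a; simp [Sym2.mem_iff]

lemma ncard_memSet {G : SimpleGraph (Fin k)} {e : Sym2 (Fin k)} (he : e ∈ G.edgeSet) :
    ({a | a ∈ e} : Set (Fin k)).ncard = 2 := by
  induction e using Sym2.ind with
  | _ p q =>
    rw [memSet_pair]
    exact Set.ncard_pair (G.ne_of_adj he)

lemma glue_inl_mem (G : SimpleGraph (Fin k)) (hG : IsIncreasing12Tree G)
    (hc : G.edgeSet.ncard = m - 1) (x : Fin k) (hk : 1 ≤ k) (hm : 2 ≤ m) :
    IsIncreasing12Tree (glue G {x}) ∧ (glue G {x}).edgeSet.ncard = m := by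
  constructor
  · rw [isInc_glue_iff _ _ hk]
    refine ⟨hG, ⟨x, rfl⟩, by simp, ?_⟩
    rintro a ha b hb hab
    rw [Set.mem_singleton_iff] at ha hb
    exact absurd (ha.trans hb.symm) hab
  · rw [ncard_edgeSet_glue, hc, Set.ncard_singleton]; omega

lemma glue_inr_mem (G : SimpleGraph (Fin k)) (hG : IsIncreasing12Tree G)
    (hc : G.edgeSet.ncard = m - 2) (e : Sym2 (Fin k)) (he : e ∈ G.edgeSet)
    (hk : 1 ≤ k) (hm : 2 ≤ m) :
    IsIncreasing12Tree (glue G {a | a ∈ e}) ∧ (glue G {a | a ∈ e}).edgeSet.ncard = m := by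
  induction e using Sym2.ind with
  | _ p q =>
    have hadj : G.Adj p q := he
    have hpq : p ≠ q := G.ne_of_adj hadj
    rw [memSet_pair]
    constructor
    · rw [isInc_glue_iff _ _ hk]
      refine ⟨hG, ⟨p, Or.inl rfl⟩, (Set.ncard_pair hpq).le, ?_⟩
      rintro a (rfl | rfl) b (rfl | rfl) hab
      · exact absurd rfl hab
      · exact hadj
      · exact hadj.symm
      · exact absurd rfl hab
    · rw [ncard_edgeSet_glue, hc, Set.ncard_pair hpq]; omega

def Ψ (hk : 1 ≤ k) (hm : 2 ≤ m) : T k m → Sub (k + 1) m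
  | .inl (G, x) => ⟨glue G.1 {x}, glue_inl_mem G.1 G.2.1 G.2.2 x hk hm⟩
  | .inr ⟨G, e, he⟩ => ⟨glue G.1 {a | a ∈ e}, glue_inr_mem G.1 G.2.1 G.2.2 e he hk hm⟩

lemma Ψ_inj (hk : 1 ≤ k) (hm : 2 ≤ m) : Function.Injective (Ψ (k := k) (m := m) hk hm) := by
  rintro t1 t2 h
  rcases t1 with ⟨G1, x1⟩ | ⟨G1, e1, he1⟩ <;> rcases t2 with ⟨G2, x2⟩ | ⟨G2, e2, he2⟩ <;>
    simp only [Ψ, Subtype.mk.injEq] at h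
  · have hG : G1.1 = G2.1 := by rw [← res_glue G1.1 {x1}, h, res_glue]
    have hD : ({x1} : Set (Fin k)) = {x2} := by rw [← att_glue G1.1 {x1}, h, att_glue]
    rw [Set.singleton_eq_singleton_iff] at hD
    obtain rfl : G1 = G2 := Subtype.ext hG
    rw [hD]
  · have hD : ({x1} : Set (Fin k)) = {a | a ∈ e2} := by
      rw [← att_glue G1.1 {x1}, h, att_glue]
    have := congrArg Set.ncard hD
    rw [Set.ncard_singleton, ncard_memSet he2] at this
    omega
  · have hD : ({a | a ∈ e1} : Set (Fin k)) = {x2} := by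
      rw [← att_glue G1.1 {a | a ∈ e1}, h, att_glue]
    have := congrArg Set.ncard hD
    rw [Set.ncard_singleton, ncard_memSet he1] at this
    omega
  · have hG : G1.1 = G2.1 := by rw [← res_glue G1.1 {a | a ∈ e1}, h, res_glue]
    obtain rfl : G1 = G2 := Subtype.ext hG
    have hD : ({a | a ∈ e1} : Set (Fin k)) = {a | a ∈ e2} := by
      rw [← att_glue G1.1 {a | a ∈ e1}, h, att_glue]
    obtain rfl : e1 = e2 := Sym2.ext (fun z => Set.ext_iff.mp hD z)
    rfl

lemma Ψ_surj (hk : 1 ≤ k) (hm : 2 ≤ m) : Function.Surjective (Ψ (k := k) (m := m) hk hm) := by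
  rintro ⟨G, hinc, hcard⟩
  have hG := glue_eq_self G
  obtain ⟨hinc', hne, hle, hcl⟩ := (isInc_glue_iff (res G) (att G) hk).mp (by rw [hG]; exact hinc)
  have hm2 : (res G).edgeSet.ncard + (att G).ncard = m := by
    rw [← ncard_edgeSet_glue, hG]; exact hcard
  have h1 : 0 < (att G).ncard := (Set.ncard_pos (Set.toFinite _)).mpr hne
  rcases (by omega : (att G).ncard = 1 ∨ (att G).ncard = 2) with h | h
  · obtain ⟨x, hx⟩ := Set.ncard_eq_one.mp h
    refine ⟨Sum.inl (⟨res G, hinc', by omega⟩, x), Subtype.ext ?_⟩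
    show glue (res G) {x} = G
    rw [← hx, hG]
  · obtain ⟨x, y, hxy, hD⟩ := Set.ncard_eq_two.mp h
    have hadj : (res G).Adj x y :=
      hcl x (hD ▸ Set.mem_insert x {y}) y (hD ▸ Set.mem_insert_of_mem x rfl) hxy
    refine ⟨Sum.inr ⟨⟨res G, hinc', by omega⟩, ⟨s(x, y), hadj⟩⟩, Subtype.ext ?_⟩
    show glue (res G) {a | a ∈ s(x, y)} = G
    rw [memSet_pair, ← hD, hG]

end Inc12Aux

namespace Inc12Aux

lemma sigma_card {ι : Type*} [Finite ι] (β : ι → Type*) [∀ i, Finite (β i)] (c : ℕ)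
    (h : ∀ i, Nat.card (β i) = c) : Nat.card (Σ i, β i) = Nat.card ι * c := by
  classical
  have : Fintype ι := Fintype.ofFinite ι
  have : ∀ i, Fintype (β i) := fun i => Fintype.ofFinite _
  simp only [Nat.card_eq_fintype_card, Fintype.card_sigma]
  have h' : ∀ i, Fintype.card (β i) = c := fun i => by rw [← Nat.card_eq_fintype_card, h]
  simp [h', Finset.sum_const, Finset.card_univ]

variable {k m : ℕ}

lemma key (hk : 1 ≤ k) (hm : 2 ≤ m) :
    numInc12Trees (k + 1) m = k * numInc12Trees k (m - 1) + (m - 2) * numInc12Trees k (m - 2) := by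
  have hbij : Function.Bijective (Ψ (k := k) (m := m) hk hm) := ⟨Ψ_inj hk hm, Ψ_surj hk hm⟩
  have h0 : numInc12Trees (k + 1) m = Nat.card (T k m) :=
    (Nat.card_eq_of_bijective _ hbij).symm
  rw [h0]
  unfold T
  rw [Nat.card_sum, Nat.card_prod]
  have hfib : ∀ G : Sub k (m - 2), Nat.card {e : Sym2 (Fin k) // e ∈ G.1.edgeSet} = m - 2 := by
    intro G
    rw [Nat.card_coe_set_eq, G.2.2]
  rw [sigma_card _ (m - 2) hfib]
  have hcf : Nat.card (Fin k) = k := Nat.card_eq_fintype_card.trans (Fintype.card_fin k)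
  rw [hcf, mul_comm, mul_comm (Nat.card (Sub k (m - 2)))]
  rfl

lemma graph_fin_one_eq_bot (G : SimpleGraph (Fin 1)) : G = ⊥ := by
  ext u v
  simp only [SimpleGraph.bot_adj, iff_false]
  intro h
  exact G.ne_of_adj h (Subsingleton.elim u v)

lemma case10 : numInc12Trees 1 0 = 1 := by
  rw [numInc12Trees, Nat.card_eq_one_iff_unique]
  refine ⟨⟨fun a b => Subtype.ext ?_⟩, ?_⟩
  · rw [graph_fin_one_eq_bot a.1, graph_fin_one_eq_bot b.1]
  · refine ⟨⟨⊥, fun v hv => absurd v.isLt (by omega), ?_⟩⟩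
    rw [SimpleGraph.edgeSet_bot]
    exact Set.ncard_empty _

lemma case1m (m : ℕ) (hm : 1 ≤ m) : numInc12Trees 1 m = 0 := by
  rw [numInc12Trees]
  have : IsEmpty {G : SimpleGraph (Fin 1) // IsIncreasing12Tree G ∧ G.edgeSet.ncard = m} := by
    refine ⟨fun ⟨G, _, hc⟩ => ?_⟩
    rw [graph_fin_one_eq_bot G, SimpleGraph.edgeSet_bot, Set.ncard_empty] at hc
    omega
  exact Nat.card_of_isEmpty

lemma graph_fin_two (G : SimpleGraph (Fin 2)) (h : IsIncreasing12Tree G) : G = ⊤ := by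
  have h01 : G.Adj 1 0 := by
    obtain ⟨⟨x, hx, hlt⟩, -, -⟩ := h 1 (by norm_num)
    have hx0 : x = 0 := by
      have := hlt
      rw [Fin.lt_def] at this
      exact Fin.ext (by simpa using this)
    rwa [hx0] at hx
  ext u v
  simp only [SimpleGraph.top_adj]
  constructor
  · exact G.ne_of_adj
  · intro huv
    fin_cases u <;> fin_cases v <;> first
      | exact absurd rfl huv
      | exact h01.symm
      | exact h01

lemma inc_top_fin_two : IsIncreasing12Tree (⊤ : SimpleGraph (Fin 2)) := by
  intro v hv
  have hv1 : v = 1 := by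
    fin_cases v
    · simp at hv
    · rfl
  subst hv1
  have hln : lowerNbrs (⊤ : SimpleGraph (Fin 2)) 1 = {0} := by
    ext x
    fin_cases x <;> simp [lowerNbrs] <;> decide
  rw [hln]
  refine ⟨⟨0, rfl⟩, by simp, ?_⟩
  rintro x rfl y rfl hxy
  exact absurd rfl hxy

lemma edgeSet_top_fin_two : (⊤ : SimpleGraph (Fin 2)).edgeSet = {s(0, 1)} := by
  ext e
  induction e using Sym2.ind with
  | _ u v =>
    simp only [SimpleGraph.mem_edgeSet, SimpleGraph.top_adj, Set.mem_singleton_iff]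
    fin_cases u <;> fin_cases v <;> decide

lemma case21 : numInc12Trees 2 1 = 1 := by
  rw [numInc12Trees, Nat.card_eq_one_iff_unique]
  refine ⟨⟨fun a b => Subtype.ext ?_⟩, ?_⟩
  · rw [graph_fin_two a.1 a.2.1, graph_fin_two b.1 b.2.1]
  · refine ⟨⟨⊤, inc_top_fin_two, ?_⟩⟩
    rw [edgeSet_top_fin_two]
    exact Set.ncard_singleton _

end Inc12Aux


/-- The numbers `c(n,m)` of increasing 1,2-trees with `n` vertices and `m` edges satisfy the
recurrence `c(n,m) = (n-1)·c(n-1,m-1) + (m-2)·c(n-1,m-2)`. -/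
theorem numInc12Trees_recurrence :
    numInc12Trees 1 0 = 1 ∧
    (∀ m : ℕ, 1 ≤ m → numInc12Trees 1 m = 0) ∧
    numInc12Trees 2 1 = 1 ∧
    (∀ n : ℕ, 2 ≤ n → ∀ m : ℕ, 2 ≤ m →
      numInc12Trees n m =
        (n - 1) * numInc12Trees (n - 1) (m - 1) + (m - 2) * numInc12Trees (n - 1) (m - 2)) := by

  refine ⟨Inc12Aux.case10, Inc12Aux.case1m, Inc12Aux.case21, ?_⟩
  intro n hn m hm
  obtain ⟨k, rfl⟩ : ∃ k, n = k + 1 := ⟨n - 1, by omega⟩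
  have hk : 1 ≤ k := by omega
  simpa using Inc12Aux.key hk hm
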